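/- Let K be a field, A ∈ K[x]^{n×n} non-singular of degree less than d with determinantal degree ν = deg det A ≠ 0, and B ∈ K[x]^{p×n}. Then there exist a surjective map σ : K[x]^{n×p} → K^{ν×p}, and constant matrices X ∈ K^{p×ν} and A_o ∈ K^{ν×ν}, such that for every P ∈ K[x]^{n×p} one has B A^{-1} P = Q + X (xI_ν − A_o)^{-1} σ(P) in K(x)^{p×p} for some polynomial matrix Q ∈ K[x]^{p×p} (depending on P), where moreover the restriction of σ to matrices of degree at most d−1 is surjective. Additionally, a non-singular matrix S ∈ K[x]^{p×p} is the denominator of a left coprime fraction description of B A^{-1} if and only if S is the denominator of a left coprime fraction description of X (xI_ν − A_o)^{-1}. -/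

import Mathlib

open Polynomial Matrix

namespace PolyNull

variable {K : Type*} [Field K]

/-- Degree of a polynomial row vector: max of `natDegree` of its entries. -/
noncomputable def vecDeg {m : Type*} [Fintype m] (v : m → Polynomial K) : ℕ :=
  Finset.univ.sup fun i => (v i).natDegree

/-- Degree of a polynomial matrix: max of degrees of its entries. -/
noncomputable def matDeg {m n : Type*} [Fintype m] [Fintype n]
    (M : Matrix m n (Polynomial K)) : ℕ :=
  Finset.univ.sup fun ij : m × n => (M ij.1 ij.2).natDegree

/-- View a polynomial matrix as a matrix over the rational function field `K(x)`. -/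
noncomputable def ratMat {m n : Type*} (M : Matrix m n (Polynomial K)) :
    Matrix m n (RatFunc K) :=
  M.map (algebraMap (Polynomial K) (RatFunc K))

/-- Rank of a polynomial matrix (its rank over `K(x)`). -/
noncomputable def polyRank {m n : Type*} [Fintype m] [Fintype n]
    (M : Matrix m n (Polynomial K)) : ℕ :=
  (ratMat M).rank

/-- The left nullspace `K[x]`-module of a polynomial matrix. -/
noncomputable def leftNullMod {m n : Type*} [Fintype m] (M : Matrix m n (Polynomial K)) :
    Submodule (Polynomial K) (m → Polynomial K) :=
  LinearMap.ker M.vecMulLinear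

/-- `N` is a family of rows forming a basis of the left nullspace module of `M`. -/
def IsNullBasis {m n ι : Type*} [Fintype m] (M : Matrix m n (Polynomial K))
    (N : ι → (m → Polynomial K)) : Prop :=
  LinearIndependent (Polynomial K) N ∧
    Submodule.span (Polynomial K) (Set.range N) = leftNullMod M

/-- Minimal basis of the left nullspace module: a basis whose sorted row degrees are
pointwise minimal among all bases; equivalently (order-free formulation), for every
degree threshold it has at least as many rows of degree at most the threshold as
any other basis. -/
def IsMinimalNullBasis {m n ι : Type*} [Fintype m] [Fintype ι]
    (M : Matrix m n (Polynomial K)) (N : ι → (m → Polynomial K)) : Prop :=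
  IsNullBasis M N ∧
    ∀ N' : ι → (m → Polynomial K), IsNullBasis M N' →
      ∀ δ : ℕ, (Finset.univ.filter fun i => vecDeg (N' i) ≤ δ).card
        ≤ (Finset.univ.filter fun i => vecDeg (N i) ≤ δ).card

open scoped Classical in
/-- McMillan degree of a rank-`r` polynomial matrix: the maximum of the degrees of the
determinants of its `r × r` submatrices. -/
noncomputable def mcMillanDeg {m n : Type*} [Fintype m] [Fintype n]
    (M : Matrix m n (Polynomial K)) (r : ℕ) : ℕ :=
  Finset.univ.sup fun fg : (Fin r → m) × (Fin r → n) =>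
    if Function.Injective fg.1 ∧ Function.Injective fg.2 then
      (M.submatrix fg.1 fg.2).det.natDegree
    else 0

/-- Rank of the evaluation of a polynomial matrix at a point of the algebraic closure. -/
noncomputable def evalRank {m n : Type*} [Fintype n]
    (M : Matrix m n (Polynomial K)) (x₀ : AlgebraicClosure K) : ℕ :=
  (M.map fun f => Polynomial.aeval x₀ f).rank

/-- A polynomial matrix is irreducible (for its rank `r`) if it has rank `r` at every
point of the algebraic closure of `K`. -/
def IsIrreducibleMat {m n : Type*} [Fintype n]
    (M : Matrix m n (Polynomial K)) (r : ℕ) : Prop :=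
  ∀ x₀ : AlgebraicClosure K, evalRank M x₀ = r

/-- Leading row coefficient matrix of a polynomial matrix. -/
noncomputable def leadingRowMatrix {k m : Type*} [Fintype m]
    (N : Matrix k m (Polynomial K)) : Matrix k m K :=
  fun i j => (N i j).coeff (vecDeg (N i))

/-- A polynomial matrix is row-reduced if its leading row coefficient matrix has full
row rank. -/
def IsRowReduced {k m : Type*} [Fintype k] [Fintype m]
    (N : Matrix k m (Polynomial K)) : Prop :=
  (leadingRowMatrix N).rank = Fintype.card k

/-- `S` and `N` are left coprime: every non-singular common left divisor is unimodular. -/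
def LeftCoprime {p n : Type*} [Fintype p] [DecidableEq p]
    (S : Matrix p p (Polynomial K)) (N : Matrix p n (Polynomial K)) : Prop :=
  ∀ U : Matrix p p (Polynomial K), U.det ≠ 0 →
    (∃ S', S = U * S') → (∃ N', N = U * N') → IsUnit U.det

/-- `C` and `T` are right coprime: every non-singular common right divisor is unimodular. -/
def RightCoprime {p n : Type*} [Fintype p] [DecidableEq p]
    (C : Matrix n p (Polynomial K)) (T : Matrix p p (Polynomial K)) : Prop :=
  ∀ U : Matrix p p (Polynomial K), U.det ≠ 0 →
    (∃ C', C = C' * U) → (∃ T', T = T' * U) → IsUnit U.det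

/-- `S` is the denominator of a left coprime fraction description of `H`. -/
noncomputable def IsLeftCoprimeDenom {p n : Type*} [Fintype p] [DecidableEq p]
    (S : Matrix p p (Polynomial K)) (H : Matrix p n (RatFunc K)) : Prop :=
  S.det ≠ 0 ∧ ∃ N : Matrix p n (Polynomial K), ratMat S * H = ratMat N ∧ LeftCoprime S N


noncomputable section SPsec

/-- algebraMap K[X] → RatFunc K as a K-linear map. -/
def aL : K[X] →ₗ[K] RatFunc K := (IsScalarTower.toAlgHom K K[X] (RatFunc K)).toLinearMap

@[simp] lemma aL_apply (p : K[X]) : (aL p : RatFunc K) = algebraMap K[X] (RatFunc K) p := rfl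

lemma aL_injective : Function.Injective (aL (K := K)) := by
  intro a b h
  exact IsFractionRing.injective K[X] (RatFunc K) h

/-- The subspace of strictly proper rational functions. -/
def SP : Submodule K (RatFunc K) where
  carrier := {f | f = 0 ∨ f.intDegree < 0}
  zero_mem' := Or.inl rfl
  add_mem' := by
    rintro f g (rfl | hf) (rfl | hg)
    · simp
    · simpa using Or.inr hg
    · simpa using Or.inr hf
    · by_cases hfg : f + g = 0
      · exact Or.inl hfg
      · by_cases hgz : g = 0
        · subst hgz; simpa using Or.inr hf
        · exact Or.inr (lt_of_le_of_lt (RatFunc.intDegree_add_le hgz hfg)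
            (max_lt hf hg))
  smul_mem' := by
    intro c f hf
    rcases hf with rfl | hf
    · simp
    · by_cases hc : c = 0
      · simp [hc]
      · right
        by_cases hfz : f = 0
        · simp [hfz] at *
        · have hcf : (algebraMap K (RatFunc K) c) ≠ 0 := by
            simpa using hc
          have : c • f = algebraMap K (RatFunc K) c * f := Algebra.smul_def c f
          rw [this, RatFunc.intDegree_mul hcf hfz]
          have : (algebraMap K (RatFunc K) c).intDegree = 0 := by
            rw [IsScalarTower.algebraMap_apply K K[X] (RatFunc K) c]
            rw [RatFunc.intDegree_polynomial]
            simp [Polynomial.algebraMap_eq]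
          omega

lemma mem_SP_iff {f : RatFunc K} : f ∈ SP ↔ f = 0 ∨ f.intDegree < 0 := Iff.rfl

/-- The polynomials as a K-subspace of RatFunc. -/
def Pl : Submodule K (RatFunc K) := LinearMap.range (aL (K := K))

lemma isCompl_Pl_SP : IsCompl (Pl (K := K)) SP := by
  constructor
  · rw [disjoint_iff_inf_le]
    rintro f ⟨⟨p, rfl⟩, hsp⟩
    rcases hsp with h0 | hd
    · simp [h0]
    · exfalso
      have hp : p ≠ 0 := by rintro rfl; simp at hd
      rw [aL_apply, RatFunc.intDegree_polynomial] at hd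
      omega
  · rw [codisjoint_iff_le_sup]
    intro f _
    set q := f.num /ₘ f.denom with hq
    set r := f.num %ₘ f.denom with hr
    have hmon : f.denom.Monic := f.monic_denom
    have key : f = aL q + (f - aL q) := by ring
    have hsp : f - aL q ∈ (SP : Submodule K (RatFunc K)) := by
      have hd0 : algebraMap K[X] (RatFunc K) f.denom ≠ 0 := by
        simpa using f.denom_ne_zero
      have hfr : (f - aL q) * algebraMap K[X] (RatFunc K) f.denom
          = algebraMap K[X] (RatFunc K) r := by
        have h1 : f * algebraMap K[X] (RatFunc K) f.denom
            = algebraMap K[X] (RatFunc K) f.num := by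
          exact ((div_eq_iff hd0).mp f.num_div_denom).symm
        have h2 : r + f.denom * q = f.num := Polynomial.modByMonic_add_div f.num f.denom
        rw [sub_mul, h1, aL_apply, ← h2, _root_.map_add, _root_.map_mul]; ring
      by_cases hz : f - aL q = 0
      · exact Or.inl hz
      · right
        have hrne : r ≠ 0 := by
          rintro h0
          rw [h0, map_zero, mul_eq_zero] at hfr
          rcases hfr with h | h
          · exact hz (by simpa using h)
          · exact hd0 h
        have hdeg : (f - aL q).intDegree + (f.denom.natDegree : ℤ) = (r.natDegree : ℤ) := by
          have := RatFunc.intDegree_mul hz hd0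
          rw [hfr] at this
          rw [RatFunc.intDegree_polynomial] at this
          have hd : (algebraMap K[X] (RatFunc K) f.denom).intDegree = f.denom.natDegree :=
            RatFunc.intDegree_polynomial
          omega
        have hlt : r.natDegree < f.denom.natDegree := by
          have hdlt : r.degree < f.denom.degree := Polynomial.degree_modByMonic_lt _ hmon
          exact Polynomial.natDegree_lt_natDegree hrne hdlt
        omega
    exact Submodule.mem_sup.mpr ⟨aL q, ⟨q, rfl⟩, f - aL q, hsp, by ring⟩

/-- Polynomial part. -/
def polPart : RatFunc K →ₗ[K] K[X] :=
  ((LinearEquiv.ofInjective aL aL_injective).symm.toLinearMap).comp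
    (Submodule.linearProjOfIsCompl Pl SP isCompl_Pl_SP)

/-- Strictly proper part. -/
def spPart : RatFunc K →ₗ[K] RatFunc K :=
  LinearMap.id - aL.comp polPart

lemma aL_polPart (f : RatFunc K) :
    aL (polPart f) = (Submodule.linearProjOfIsCompl Pl SP isCompl_Pl_SP f : RatFunc K) := by
  set e := LinearEquiv.ofInjective aL (aL_injective (K := K)) with he
  set y := Submodule.linearProjOfIsCompl Pl SP isCompl_Pl_SP f with hy
  have h1 : aL (e.symm y) = ((e (e.symm y) : Pl (K := K)) : RatFunc K) := by
    rw [he]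
    exact (LinearEquiv.ofInjective_apply (h := aL_injective) aL (e.symm y)).symm
  have h2 : e (e.symm y) = y := e.apply_symm_apply y
  show aL (e.symm y) = (y : RatFunc K)
  rw [h1, h2]

lemma decomp (f : RatFunc K) : f = aL (polPart f) + spPart f := by
  simp [spPart]

lemma spPart_mem_SP (f : RatFunc K) : spPart f ∈ (SP : Submodule K (RatFunc K)) := by
  have h := Submodule.projection_add_projection_eq_self isCompl_Pl_SP f
  have heq : spPart f = (Submodule.linearProjOfIsCompl SP Pl isCompl_Pl_SP.symm f : RatFunc K) := by
    have h1 : spPart f = f - aL (polPart f) := by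
      simp [spPart]
    rw [h1, aL_polPart]
    exact sub_eq_iff_eq_add'.mpr h.symm
  rw [heq]; exact (Submodule.linearProjOfIsCompl SP Pl isCompl_Pl_SP.symm f).2

lemma polPart_aL (p : K[X]) : polPart (aL p) = p := by
  apply aL_injective
  rw [aL_polPart]
  exact congrArg Subtype.val (Submodule.projectionOnto_apply_left isCompl_Pl_SP ⟨aL p, ⟨p, rfl⟩⟩)

lemma polPart_of_mem_SP {f : RatFunc K} (hf : f ∈ (SP : Submodule K (RatFunc K))) :
    polPart f = 0 := by
  apply aL_injective
  rw [aL_polPart, map_zero]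
  exact congrArg _ (Submodule.projectionOnto_apply_of_mem_right isCompl_Pl_SP hf)

lemma spPart_of_mem_SP {f : RatFunc K} (hf : f ∈ (SP : Submodule K (RatFunc K))) :
    spPart f = f := by
  have := decomp f
  rw [polPart_of_mem_SP hf] at this
  simpa using this.symm

lemma spPart_aL (p : K[X]) : spPart (aL p) = 0 := by
  have := decomp (aL p)
  rw [polPart_aL] at this
  exact (left_eq_add.mp this).symm ▸ rfl


/-- The "residue at infinity": constant term of the polynomial part of `x * f`. -/
def resK : RatFunc K →ₗ[K] K :=
  (Polynomial.lcoeff K 0).comp (polPart.comp (LinearMap.mulLeft K (aL (X : K[X]))))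

lemma intDegree_aL {p : K[X]} (hp : p ≠ 0) :
    (aL (K := K) p).intDegree = p.natDegree := by
  rw [aL_apply, RatFunc.intDegree_polynomial]

lemma aL_ne_zero {p : K[X]} (hp : p ≠ 0) : aL (K := K) p ≠ 0 := by
  simp only [aL_apply, ne_eq, map_eq_zero_iff _ (IsFractionRing.injective K[X] (RatFunc K))]
  exact hp

/-- For strictly proper `f`, the polynomial part of `x*f` is a constant. -/
lemma polPart_X_mul_mem_SP {f : RatFunc K} (hf : f ∈ (SP : Submodule K (RatFunc K))) :
    polPart (aL (X : K[X]) * f) = Polynomial.C (resK f) := by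
  have hconst : (polPart (aL (X : K[X]) * f)).natDegree = 0 := by
    by_cases hfz : f = 0
    · simp [hfz]
    rcases hf with h0 | hd
    · exact absurd h0 hfz
    set g := aL (X : K[X]) * f with hg
    have hX0 : aL (K := K) (X : K[X]) ≠ 0 := aL_ne_zero X_ne_zero
    have hgz : g ≠ 0 := mul_ne_zero hX0 hfz
    have hgdeg : g.intDegree ≤ 0 := by
      rw [hg, RatFunc.intDegree_mul hX0 hfz, intDegree_aL X_ne_zero]
      simp only [natDegree_X]
      omega
    set P := polPart g with hP
    by_cases hPz : P = 0
    · simp [hPz]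
    -- aL P = g - spPart g
    have hdec : aL P = g - spPart g := by
      have := decomp g
      rw [← hP] at this
      exact eq_sub_of_add_eq this.symm
    have hsp := spPart_mem_SP g
    have : (aL (K := K) P).intDegree ≤ 0 := by
      by_cases hsz : spPart g = 0
      · rw [hdec, hsz, sub_zero]; exact hgdeg
      · have hne : aL (K := K) P ≠ 0 := aL_ne_zero hPz
        have hns : -spPart g ≠ 0 := neg_ne_zero.mpr hsz
        have hsum : g + -spPart g ≠ 0 := by
          rw [← sub_eq_add_neg, ← hdec]; exact hne
        have hle := RatFunc.intDegree_add_le (x := g) (y := -spPart g) hns hsum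
        rw [← sub_eq_add_neg, ← hdec] at hle
        rw [RatFunc.intDegree_neg] at hle
        have hsd : (spPart g).intDegree < 0 := by
          rcases hsp with h | h
          · exact absurd h hsz
          · exact h
        calc (aL (K := K) P).intDegree ≤ max g.intDegree (spPart g).intDegree := hle
          _ ≤ 0 := by exact max_le hgdeg (le_of_lt hsd)
    rw [intDegree_aL hPz] at this
    omega
  have := Polynomial.eq_C_of_natDegree_eq_zero hconst
  rw [this]
  congr 1

/-- Key residue identity: for strictly proper `f`,
`x * f = C (resK f) + spPart (x * f)`. -/
lemma res_key {f : RatFunc K} (hf : f ∈ (SP : Submodule K (RatFunc K))) :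
    aL (X : K[X]) * f = aL (Polynomial.C (resK f)) + spPart (aL (X : K[X]) * f) := by
  conv_lhs => rw [decomp (aL (X : K[X]) * f)]
  rw [polPart_X_mul_mem_SP hf]

end SPsec


noncomputable section Dim

lemma mulVecLin_injective {n : ℕ} (A : Matrix (Fin n) (Fin n) K[X]) (hA : A.det ≠ 0) :
    Function.Injective A.mulVecLin := by
  intro v w h
  have h0 : A.mulVec (v - w) = 0 := by
    have : A.mulVec v = A.mulVec w := h
    simp [Matrix.mulVec_sub, this]
  have key : A.det • (v - w) = 0 := by
    have h1 : (A.adjugate * A).mulVec (v - w) = A.adjugate.mulVec (A.mulVec (v - w)) :=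
      (Matrix.mulVec_mulVec _ _ _).symm
    rw [Matrix.adjugate_mul, h0, Matrix.mulVec_zero] at h1
    rw [← h1, Matrix.smul_mulVec, Matrix.one_mulVec]
  have : v - w = 0 := by
    funext i
    have := congrFun key i
    simp only [Pi.smul_apply, smul_eq_mul, Pi.zero_apply] at this
    rcases mul_eq_zero.mp this with h | h
    · exact absurd h hA
    · exact h
  exact sub_eq_zero.mp this

set_option maxHeartbeats 1000000 in
theorem quotient_findim {n : ℕ} (A : Matrix (Fin n) (Fin n) K[X]) (hA : A.det ≠ 0) :
    FiniteDimensional K ((Fin n → K[X]) ⧸ LinearMap.range A.mulVecLin) ∧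
    Module.finrank K ((Fin n → K[X]) ⧸ LinearMap.range A.mulVecLin) = A.det.natDegree := by
  classical
  set N : Submodule K[X] (Fin n → K[X]) := LinearMap.range A.mulVecLin with hN
  have hinj := mulVecLin_injective A hA
  let eN : (Fin n → K[X]) ≃ₗ[K[X]] N := LinearEquiv.ofInjective A.mulVecLin hinj
  obtain ⟨m, bM, bN, f, a, snf⟩ := N.smithNormalForm (Pi.basisFun K[X] (Fin n))
  have hm : m = n := by
    have h1 : Module.finrank K[X] N = m := Module.finrank_eq_card_basis bN |>.trans (by simp)
    have h2 : Module.finrank K[X] (Fin n → K[X]) = n := by simp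
    have h3 := LinearEquiv.finrank_eq eN
    omega
  have hbij : Function.Bijective f :=
    (Fintype.bijective_iff_injective_and_card f).mpr ⟨f.injective, by simp [hm]⟩
  let e : Fin m ≃ Fin n := Equiv.ofBijective f hbij
  set a' : Fin n → K[X] := fun j => a (e.symm j) with ha'def
  let bN' : Module.Basis (Fin n) K[X] N := bN.reindex e
  have hsnf' : ∀ j, (bN' j : Fin n → K[X]) = a' j • bM j := by
    intro j
    have h1 : (bN (e.symm j) : Fin n → K[X]) = a (e.symm j) • bM (f (e.symm j)) := snf _
    have h2 : f (e.symm j) = j := e.apply_symm_apply j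
    simpa [bN', Module.Basis.reindex_apply, h2] using h1
  have ha' : ∀ j, a' j ≠ 0 := by
    intro j hj
    have h0 : (bN' j : Fin n → K[X]) = 0 := by rw [hsnf' j, hj, zero_smul]
    exact Module.Basis.ne_zero bN' j (Subtype.ext h0)
  -- membership characterization
  have mem_iff : ∀ x : Fin n → K[X], x ∈ N ↔ ∀ j, a' j ∣ bM.repr x j := by
    intro x
    rw [bN'.mem_submodule_iff']
    have hrepr : ∀ (c : Fin n → K[X]) (i), bM.repr (∑ j, c j • (a' j • bM j)) i = a' i * c i := by
      intro c i
      simp only [← mul_smul]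
      rw [map_sum]
      simp only [_root_.map_smul]
      rw [Finset.sum_apply']
      simp only [Module.Basis.repr_self, Finsupp.smul_single, smul_eq_mul, mul_one,
        Finsupp.single_apply]
      rw [Finset.sum_ite_eq' Finset.univ i (fun j => c j * a' j)]
      simp [mul_comm]
    constructor
    · rintro ⟨c, rfl⟩ i
      refine ⟨c i, ?_⟩
      simp_rw [hsnf']
      rw [hrepr]
    · intro hall
      choose c hc using hall
      refine ⟨c, ?_⟩
      apply bM.ext_elem
      intro i
      simp_rw [hsnf']
      rw [hrepr c i, hc i, mul_comm]
  set I' : Submodule K[X] (Fin n → K[X]) := Submodule.pi Set.univ fun j => Ideal.span {a' j} with hI'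
  have hmap : Submodule.map (bM.equivFun : (Fin n → K[X]) →ₗ[K[X]] (Fin n → K[X])) N = I' := by
    ext x
    simp only [hI', Submodule.mem_map, Submodule.mem_pi, Ideal.mem_span_singleton, Set.mem_univ,
      forall_true_left, LinearEquiv.coe_coe, Module.Basis.equivFun_apply]
    constructor
    · rintro ⟨y, hy, rfl⟩ i
      exact (mem_iff y).mp hy i
    · intro hdvd
      refine ⟨∑ i, x i • bM i, ?_, ?_⟩
      · rw [mem_iff]
        intro j
        rw [bM.repr_sum_self]
        exact hdvd j
      · funext j
        rw [bM.repr_sum_self]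
  let Q1 : ((Fin n → K[X]) ⧸ N) ≃ₗ[K[X]] ((Fin n → K[X]) ⧸ I') :=
    Submodule.Quotient.equiv N I' bM.equivFun hmap
  let Q2 := Submodule.quotientPi (fun j : Fin n => (Ideal.span {a' j} : Submodule K[X] K[X]))
  let E : ((Fin n → K[X]) ⧸ N) ≃ₗ[K] ∀ j, K[X] ⧸ (Ideal.span {a' j} : Submodule K[X] K[X]) :=
    (Q1.trans Q2).restrictScalars K
  -- each factor
  have hfact : ∀ j, Module.finrank K (K[X] ⧸ (Ideal.span {a' j} : Submodule K[X] K[X]))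
      = (a' j).natDegree := fun j => (AdjoinRoot.powerBasis (ha' j)).finrank
  have hfd : ∀ j, FiniteDimensional K (K[X] ⧸ (Ideal.span {a' j} : Submodule K[X] K[X])) := fun j =>
    Module.Finite.of_basis (AdjoinRoot.powerBasis (ha' j)).basis
  have hfdpi : FiniteDimensional K (∀ j, K[X] ⧸ (Ideal.span {a' j} : Submodule K[X] K[X])) := by
    have := hfd; exact inferInstance
  have hfdV : FiniteDimensional K ((Fin n → K[X]) ⧸ N) := Module.Finite.equiv E.symm
  have hrank : Module.finrank K ((Fin n → K[X]) ⧸ N) = ∑ j, (a' j).natDegree := by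
    rw [LinearEquiv.finrank_eq E]
    rw [Module.finrank_pi_fintype]
    exact Finset.sum_congr rfl fun j _ => hfact j
  -- determinant relation
  have hdet : A.det.natDegree = ∑ j, (a' j).natDegree := by
    have hg : N.subtype.comp (eN : (Fin n → K[X]) →ₗ[K[X]] N) = A.mulVecLin := by
      ext x
      rfl
    have hdet1 : LinearMap.det (A.mulVecLin) = A.det := by
      have : A.mulVecLin = Matrix.toLin' A := by
        ext x; simp [Matrix.toLin'_apply]
      rw [this, LinearMap.det_toLin']
    have hdet2 : LinearMap.det (N.subtype.comp (eN : (Fin n → K[X]) →ₗ[K[X]] N)) =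
        ((Matrix.diagonal a').det) * (LinearMap.toMatrix bM bN' (eN : (Fin n → K[X]) →ₗ[K[X]] N)).det := by
      rw [← LinearMap.det_toMatrix bM]
      rw [LinearMap.toMatrix_comp bM bN' bM]
      rw [Matrix.det_mul]
      congr 2
      funext i j
      rw [LinearMap.toMatrix_apply]
      simp only [Submodule.coe_subtype]
      rw [hsnf' j]
      simp only [_root_.map_smul, Module.Basis.repr_self, Finsupp.smul_apply, Finsupp.single_apply,
        smul_eq_mul, mul_ite, mul_one, mul_zero]
      rw [Matrix.diagonal_apply]
      by_cases h : i = j <;> simp [h, eq_comm]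
    have hunit : IsUnit (LinearMap.toMatrix bM bN' (eN : (Fin n → K[X]) →ₗ[K[X]] N)).det := by
      have hmul : LinearMap.toMatrix bN' bM (eN.symm : N →ₗ[K[X]] (Fin n → K[X])) *
          LinearMap.toMatrix bM bN' (eN : (Fin n → K[X]) →ₗ[K[X]] N) = 1 := by
        rw [← LinearMap.toMatrix_comp bM bN' bM]
        have : (eN.symm : N →ₗ[K[X]] (Fin n → K[X])).comp (eN : (Fin n → K[X]) →ₗ[K[X]] N)
            = LinearMap.id := by
          ext x; simp
        rw [this, LinearMap.toMatrix_id]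
      have := congrArg Matrix.det hmul
      rw [Matrix.det_mul, Matrix.det_one] at this
      exact IsUnit.of_mul_eq_one _ (by rw [mul_comm]; exact this)
    have heq : A.det = (Matrix.diagonal a').det *
        (LinearMap.toMatrix bM bN' (eN : (Fin n → K[X]) →ₗ[K[X]] N)).det := by
      rw [← hdet1, ← hg, hdet2]
    rw [heq, Matrix.det_diagonal]
    have hu0 : (LinearMap.toMatrix bM bN' (eN : (Fin n → K[X]) →ₗ[K[X]] N)).det ≠ 0 :=
      hunit.ne_zero
    have hprod0 : (∏ j, a' j) ≠ 0 := Finset.prod_ne_zero_iff.mpr fun j _ => ha' j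
    rw [Polynomial.natDegree_mul hprod0 hu0,
      Polynomial.natDegree_eq_zero_of_isUnit hunit,
      Polynomial.natDegree_prod _ _ fun j _ => ha' j]
    omega
  exact ⟨hfdV, by rw [hrank, hdet]⟩

end Dim

noncomputable section Glue

lemma ratMat_apply {m n : Type*} (M : Matrix m n K[X]) (i : m) (j : n) :
    ratMat M i j = algebraMap K[X] (RatFunc K) (M i j) := rfl

lemma ratMat_mul {m n o : Type*} [Fintype n] (M : Matrix m n K[X]) (N : Matrix n o K[X]) :
    ratMat (M * N) = ratMat M * ratMat N :=
  Matrix.map_mul (f := algebraMap K[X] (RatFunc K))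

lemma ratMat_injective {m n : Type*} :
    Function.Injective (ratMat (K := K) (m := m) (n := n)) := by
  intro M N h
  funext i j
  exact IsFractionRing.injective K[X] (RatFunc K) (congrFun (congrFun h i) j)

lemma ratMat_mulVec {m n : Type*} [Fintype n] (M : Matrix m n K[X]) (v : n → K[X]) (i : m) :
    (ratMat M).mulVec (fun k => algebraMap K[X] (RatFunc K) (v k)) i
      = algebraMap K[X] (RatFunc K) (M.mulVec v i) := by
  simp [ratMat, Matrix.mulVec, dotProduct, Matrix.map_apply, map_sum, _root_.map_mul]

lemma det_ratMat_ne_zero {n : Type*} [Fintype n] [DecidableEq n]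
    {M : Matrix n n K[X]} (hM : M.det ≠ 0) : (ratMat M).det ≠ 0 := by
  rw [ratMat, ← RingHom.mapMatrix_apply, ← RingHom.map_det]
  simpa using fun h => hM (IsFractionRing.injective K[X] (RatFunc K) (by simpa using h))

lemma intDegree_sum_le {ι : Type*} (s : Finset ι) (g : ι → RatFunc K) (c : ℤ)
    (h : ∀ k ∈ s, g k = 0 ∨ (g k).intDegree ≤ c) :
    (∑ k ∈ s, g k) = 0 ∨ (∑ k ∈ s, g k).intDegree ≤ c := by
  classical
  induction s using Finset.cons_induction with
  | empty => simp
  | cons k s hk ih =>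
    rw [Finset.sum_cons]
    have hgk := h k (Finset.mem_cons_self k s)
    have hrest := ih (fun j hj => h j (Finset.mem_cons_of_mem hj))
    rcases hgk with h1 | h1
    · rw [h1, zero_add]; exact hrest
    rcases hrest with h2 | h2
    · rw [h2, add_zero]; exact Or.inr h1
    by_cases hz : g k + ∑ j ∈ s, g j = 0
    · exact Or.inl hz
    right
    by_cases hsz : (∑ j ∈ s, g j) = 0
    · rw [hsz, add_zero]; exact h1
    calc (g k + ∑ j ∈ s, g j).intDegree
        ≤ max (g k).intDegree (∑ j ∈ s, g j).intDegree := RatFunc.intDegree_add_le hsz hz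
      _ ≤ c := max_le h1 h2

lemma ratMat_add {m n : Type*} (M N : Matrix m n K[X]) :
    ratMat (M + N) = ratMat M + ratMat N := by
  funext i j
  simp [ratMat, Matrix.map_apply, Matrix.add_apply, map_add]

lemma ratMat_sub {m n : Type*} (M N : Matrix m n K[X]) :
    ratMat (M - N) = ratMat M - ratMat N := by
  funext i j
  simp [ratMat, Matrix.map_apply, Matrix.sub_apply, map_sub]

lemma aL_C (c : K) : aL (Polynomial.C c) = algebraMap K (RatFunc K) c := by
  rw [aL_apply, IsScalarTower.algebraMap_apply K K[X] (RatFunc K)]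
  congr 1

end Glue

set_option maxHeartbeats 2000000 in
set_option maxHeartbeats 2000000 in
set_option synthInstance.maxHeartbeats 400000 in
/-- Realization of `B A⁻¹ P`: there exist a surjective `σ`, and constant
matrices `X`, `A_o`, with `B A⁻¹ P = Q + X (xI − A_o)⁻¹ σ(P)` for every `P` (with `Q`
polynomial), `σ` being surjective already on matrices of degree at most `d − 1`;
moreover `B A⁻¹` and `X (xI − A_o)⁻¹` have the same denominators of left coprime
fraction descriptions. -/
theorem realization_of_BAinv
    {n p d : ℕ} (A : Matrix (Fin n) (Fin n) (Polynomial K)) (hA : A.det ≠ 0)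
    (hdegA : matDeg A < d)
    (B : Matrix (Fin p) (Fin n) (Polynomial K))
    (ν : ℕ) (hν : ν = A.det.natDegree) (hν0 : ν ≠ 0) :
    ∃ (σ : Matrix (Fin n) (Fin p) (Polynomial K) → Matrix (Fin ν) (Fin p) K)
      (X : Matrix (Fin p) (Fin ν) K) (Ao : Matrix (Fin ν) (Fin ν) K),
      Function.Surjective σ ∧
      (∀ Y : Matrix (Fin ν) (Fin p) K,
        ∃ P : Matrix (Fin n) (Fin p) (Polynomial K), matDeg P ≤ d - 1 ∧ σ P = Y) ∧
      (∀ P : Matrix (Fin n) (Fin p) (Polynomial K),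
        ∃ Q : Matrix (Fin p) (Fin p) (Polynomial K),
          ratMat B * (ratMat A)⁻¹ * ratMat P =
            ratMat Q + X.map (algebraMap K (RatFunc K)) * (ratMat (Matrix.charmatrix Ao))⁻¹
              * (σ P).map (algebraMap K (RatFunc K))) ∧
      (∀ S : Matrix (Fin p) (Fin p) (Polynomial K),
        IsLeftCoprimeDenom S (ratMat B * (ratMat A)⁻¹) ↔
          IsLeftCoprimeDenom S
            (X.map (algebraMap K (RatFunc K)) * (ratMat (Matrix.charmatrix Ao))⁻¹)) := by
  classical
  -- notation
  let aM : K[X] →+* RatFunc K := algebraMap K[X] (RatFunc K)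
  let aK : K →+* RatFunc K := algebraMap K (RatFunc K)
  set H : Matrix (Fin p) (Fin n) (RatFunc K) := ratMat B * (ratMat A)⁻¹ with hH
  have hdetA : (ratMat A).det ≠ 0 := det_ratMat_ne_zero hA
  have hAinv : ratMat A * (ratMat A)⁻¹ = 1 := Matrix.mul_nonsing_inv _ (isUnit_iff_ne_zero.mpr hdetA)
  have hAinv' : (ratMat A)⁻¹ * ratMat A = 1 := Matrix.nonsing_inv_mul _ (isUnit_iff_ne_zero.mpr hdetA)
  -- the quotient module
  set N : Submodule K[X] (Fin n → K[X]) := LinearMap.range A.mulVecLin with hNdef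
  obtain ⟨hfd, hfr⟩ := quotient_findim A hA
  haveI : FiniteDimensional K ((Fin n → K[X]) ⧸ N) := hfd
  let bV : Module.Basis (Fin ν) K ((Fin n → K[X]) ⧸ N) :=
    (Module.finBasis K _).reindex (finCongr (by rw [hfr, ← hν]))
  let π : (Fin n → K[X]) →ₗ[K[X]] ((Fin n → K[X]) ⧸ N) := N.mkQ
  -- ψ and φ0
  let aVL : (Fin n → K[X]) →ₗ[K] (Fin n → RatFunc K) :=
    LinearMap.pi fun i => aL.comp (LinearMap.proj i)
  have haMsmul : ∀ (c : K) (q : K[X]), aM (c • q) = c • aM q := by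
    intro c q
    rw [Algebra.smul_def, _root_.map_mul, ← IsScalarTower.algebraMap_apply, ← Algebra.smul_def]
  let ψL : (Fin n → K[X]) →ₗ[K] (Fin p → RatFunc K) :=
    { toFun := fun w => H.mulVec (fun k => aM (w k))
      map_add' := fun w w' => by
        show H.mulVec (fun k => aM ((w + w') k))
            = H.mulVec (fun k => aM (w k)) + H.mulVec (fun k => aM (w' k))
        have h : (fun k => aM ((w + w') k)) = (fun k => aM (w k)) + fun k => aM (w' k) := by
          funext k; simp [map_add]
        rw [h, Matrix.mulVec_add]
      map_smul' := fun c w => by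
        show H.mulVec (fun k => aM ((c • w) k)) = c • H.mulVec (fun k => aM (w k))
        have h : (fun k => aM ((c • w) k)) = c • fun k => aM (w k) := by
          funext k
          simp only [Pi.smul_apply]
          exact haMsmul c (w k)
        rw [h, Matrix.mulVec_smul] }
  let SpL : (Fin p → RatFunc K) →ₗ[K] (Fin p → RatFunc K) :=
    LinearMap.pi fun i => spPart.comp (LinearMap.proj i)
  let φ0 : (Fin n → K[X]) →ₗ[K] (Fin p → RatFunc K) := SpL.comp ψL
  have hψ : ∀ w, ψL w = H.mulVec (fun k => aM (w k)) := fun w => rfl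
  have hφ0 : ∀ w i, φ0 w i = spPart (ψL w i) := fun w i => rfl
  have hHA : H * ratMat A = ratMat B := by
    rw [hH, Matrix.mul_assoc, hAinv', Matrix.mul_one]
  have hψA : ∀ u, ψL (A.mulVec u) = fun i => aM (B.mulVec u i) := by
    intro u
    rw [hψ]
    have h1 : (fun k => aM (A.mulVec u k)) = (ratMat A).mulVec (fun k => aM (u k)) := by
      funext k; rw [ratMat_mulVec]
    rw [h1, Matrix.mulVec_mulVec, hHA]
    funext i
    rw [ratMat_mulVec]
  have hker : ∀ w ∈ N.restrictScalars K, w ∈ LinearMap.ker φ0 := by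
    intro w hw
    rw [LinearMap.mem_ker]
    rw [Submodule.restrictScalars_mem, hNdef, LinearMap.mem_range] at hw
    obtain ⟨u, rfl⟩ := hw
    funext i
    have h1 : φ0 (A.mulVecLin u) i = spPart (ψL (A.mulVec u) i) := rfl
    rw [h1, hψA u]
    show spPart (aL (B.mulVec u i)) = 0
    rw [spPart_aL]
  let φ' := (N.restrictScalars K).liftQ φ0 hker
  let eRS := Submodule.Quotient.restrictScalarsEquiv K N
  let φ : ((Fin n → K[X]) ⧸ N) →ₗ[K] (Fin p → RatFunc K) :=
    φ'.comp (eRS.symm : ((Fin n → K[X]) ⧸ N) →ₗ[K] ((Fin n → K[X]) ⧸ N.restrictScalars K))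
  have hφπ : ∀ w, φ (π w) = φ0 w := by
    intro w
    show φ' (eRS.symm (π w)) = φ0 w
    have h1 : eRS.symm (π w) = Submodule.Quotient.mk w :=
      Submodule.Quotient.restrictScalarsEquiv_symm_mk K N w
    rw [h1]
    exact Submodule.liftQ_apply _ φ0 _
  -- φ lands in SP
  have hφSP : ∀ v i, φ v i ∈ (SP : Submodule K (RatFunc K)) := by
    intro v i
    obtain ⟨w, rfl⟩ := N.mkQ_surjective v
    rw [show N.mkQ w = π w from rfl, hφπ, hφ0]
    exact spPart_mem_SP _
  -- the shift map
  let T : ((Fin n → K[X]) ⧸ N) →ₗ[K] ((Fin n → K[X]) ⧸ N) :=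
    { toFun := fun v => (Polynomial.X : K[X]) • v
      map_add' := fun v w => smul_add _ v w
      map_smul' := fun c v => smul_comm _ c v }
  have hTπ : ∀ w, T (π w) = π (fun i => Polynomial.X * w i) := by
    intro w
    have h : (fun i => Polynomial.X * w i) = (Polynomial.X : K[X]) • w := by
      funext i; simp [Pi.smul_apply]
    rw [h, _root_.map_smul]
    rfl
  -- key residue identity
  have hψX : ∀ w i, ψL (fun j => Polynomial.X * w j) i = aM Polynomial.X * ψL w i := by
    intro w i
    rw [hψ, hψ]
    have h : (fun k => aM ((fun j => Polynomial.X * w j) k))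
        = aM Polynomial.X • (fun k => aM (w k)) := by
      funext k
      simp [Pi.smul_apply, smul_eq_mul, _root_.map_mul]
    rw [h, Matrix.mulVec_smul]
    rfl
  have hLX : ∀ (v : (Fin n → K[X]) ⧸ N) (i : Fin p),
      aM (Polynomial.X) * φ v i = aK (resK (φ v i)) + φ (T v) i := by
    intro v i
    obtain ⟨w, rfl⟩ := N.mkQ_surjective v
    have hmkπ : N.mkQ w = π w := rfl
    rw [hmkπ]
    have hT : φ (T (π w)) i = spPart (aM Polynomial.X * φ (π w) i) := by
      rw [hTπ w, hφπ, hφπ]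
      rw [hφ0, hφ0, hψX]
      conv_lhs => rw [decomp (ψL w i)]
      rw [mul_add, map_add]
      have h2 : aM Polynomial.X * aL (polPart (ψL w i))
          = aL (Polynomial.X * polPart (ψL w i)) := by
        rw [aL_apply, aL_apply, _root_.map_mul]
      rw [h2, spPart_aL, zero_add]
    have hsp := hφSP (π w) i
    have hrk := res_key hsp
    rw [hT]
    exact hrk
  -- matrices
  let Ao : Matrix (Fin ν) (Fin ν) K := LinearMap.toMatrix bV bV T
  let Xm : Matrix (Fin p) (Fin ν) K := Matrix.of fun i k => resK (φ (bV k) i)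
  let Φ : Matrix (Fin p) (Fin ν) (RatFunc K) := Matrix.of fun i k => φ (bV k) i
  let σf : Matrix (Fin n) (Fin p) (Polynomial K) → Matrix (Fin ν) (Fin p) K :=
    fun P => Matrix.of fun k j => bV.equivFun (π (fun i => P i j)) k
  have hTb : ∀ k, T (bV k) = ∑ j, Ao j k • bV j := by
    intro k
    conv_lhs => rw [← Module.Basis.sum_repr bV (T (bV k))]
    refine Finset.sum_congr rfl fun j _ => ?_
    congr 1
    exact (LinearMap.toMatrix_apply bV bV T j k).symm
  have hφT : ∀ k i, φ (T (bV k)) i = ∑ j, aK (Ao j k) * φ (bV j) i := by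
    intro k i
    rw [hTb k, map_sum]
    rw [Finset.sum_apply]
    refine Finset.sum_congr rfl fun j _ => ?_
    rw [_root_.map_smul, Pi.smul_apply, Algebra.smul_def]
    try rfl
  have hC1 : Φ * ratMat (Matrix.charmatrix Ao) = Xm.map (algebraMap K (RatFunc K)) := by
    funext i k
    show ∑ j, Φ i j * ratMat (Matrix.charmatrix Ao) j k = (Xm.map (algebraMap K (RatFunc K))) i k
    have hterm : ∀ j, Φ i j * ratMat (Matrix.charmatrix Ao) j k
        = (if j = k then aM Polynomial.X * Φ i k else 0) - aK (Ao j k) * Φ i j := by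
      intro j
      rw [ratMat_apply]
      by_cases h : j = k
      · subst h
        rw [Matrix.charmatrix_apply_eq, if_pos rfl, map_sub]
        have hac : aM (Polynomial.C (Ao j j)) = aK (Ao j j) := aL_C _
        rw [hac]
        ring
      · rw [Matrix.charmatrix_apply_ne _ _ _ h, if_neg h, map_neg]
        have hac : aM (Polynomial.C (Ao j k)) = aK (Ao j k) := aL_C _
        rw [hac]
        ring
    rw [Finset.sum_congr rfl fun j _ => hterm j, Finset.sum_sub_distrib,
      Finset.sum_ite_eq' Finset.univ k (fun _ => aM Polynomial.X * Φ i k)]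
    simp only [Finset.mem_univ, if_true]
    have hsum : ∑ j, aK (Ao j k) * Φ i j = φ (T (bV k)) i := (hφT k i).symm
    rw [hsum]
    have hXφ : aM Polynomial.X * Φ i k = aK (resK (φ (bV k) i)) + φ (T (bV k)) i := hLX (bV k) i
    rw [show (Φ i k : RatFunc K) = φ (bV k) i from rfl] at hXφ
    rw [Matrix.map_apply]
    rw [show (Xm i k : K) = resK (φ (bV k) i) from rfl]
    rw [show (Φ i k : RatFunc K) = φ (bV k) i from rfl]
    rw [hXφ]
    ring
  have hCdet : (ratMat (Matrix.charmatrix Ao)).det ≠ 0 := by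
    apply det_ratMat_ne_zero
    have : (Matrix.charmatrix Ao).det = Ao.charpoly := rfl
    rw [this]
    exact (Matrix.charpoly_monic Ao).ne_zero
  have hC3 : Xm.map (algebraMap K (RatFunc K)) * (ratMat (Matrix.charmatrix Ao))⁻¹ = Φ := by
    rw [← hC1, Matrix.mul_assoc,
      Matrix.mul_nonsing_inv _ (isUnit_iff_ne_zero.mpr hCdet), Matrix.mul_one]
  -- expansion of φ via basis
  have hφexp : ∀ (v : (Fin n → K[X]) ⧸ N) (i : Fin p),
      φ v i = ∑ k, φ (bV k) i * aK (bV.equivFun v k) := by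
    intro v i
    conv_lhs => rw [← Module.Basis.sum_equivFun bV v]
    rw [map_sum, Finset.sum_apply]
    refine Finset.sum_congr rfl fun k _ => ?_
    rw [_root_.map_smul, Pi.smul_apply, Algebra.smul_def, mul_comm]
    try rfl
  -- main formula
  have hcolψ : ∀ {q : ℕ} (P : Matrix (Fin n) (Fin q) K[X]) (i : Fin p) (j : Fin q),
      (H * ratMat P) i j = ψL (fun k => P k j) i := by
    intro q P i j
    rw [Matrix.mul_apply, hψ]
    rfl
  have hmain : ∀ P : Matrix (Fin n) (Fin p) (Polynomial K),
      ∃ Q : Matrix (Fin p) (Fin p) (Polynomial K),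
        H * ratMat P = ratMat Q + Φ * (σf P).map (algebraMap K (RatFunc K)) := by
    intro P
    refine ⟨Matrix.of fun i j => polPart ((H * ratMat P) i j), ?_⟩
    funext i j
    show (H * ratMat P) i j = _
    rw [Matrix.add_apply]
    have hdec := decomp ((H * ratMat P) i j)
    have h1 : ratMat (Matrix.of fun i j => polPart ((H * ratMat P) i j)) i j
        = aL (polPart ((H * ratMat P) i j)) := rfl
    rw [h1]
    have h2 : spPart ((H * ratMat P) i j)
        = (Φ * (σf P).map (algebraMap K (RatFunc K))) i j := by
      rw [hcolψ P i j]
      have h3 : spPart (ψL (fun k => P k j) i) = φ (π (fun k => P k j)) i := by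
        rw [hφπ, hφ0]
      rw [h3, hφexp]
      rw [Matrix.mul_apply]
      refine Finset.sum_congr rfl fun k _ => ?_
      rfl
    rw [← h2]
    rw [hcolψ P i j] at hdec ⊢
    exact hdec
  -- degree-bounded surjectivity
  have hd1 : 1 ≤ d := Nat.one_le_of_lt (Nat.lt_of_le_of_lt (Nat.zero_le _) hdegA)
  have hrep : ∀ w : Fin n → K[X], ∃ w' : Fin n → K[X],
      π w' = π w ∧ ∀ i, (w' i).natDegree ≤ d - 1 := by
    intro w
    set u : Fin n → RatFunc K := (ratMat A)⁻¹.mulVec (fun k => aM (w k)) with hu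
    have hAu : (ratMat A).mulVec u = fun k => aM (w k) := by
      rw [hu, Matrix.mulVec_mulVec, hAinv, Matrix.one_mulVec]
    set g : Fin n → K[X] := fun k => polPart (u k) with hg
    refine ⟨w - A.mulVec g, ?_, ?_⟩
    · have hmem : A.mulVec g ∈ N := ⟨g, rfl⟩
      rw [map_sub]
      have : π (A.mulVec g) = 0 := (Submodule.Quotient.mk_eq_zero N).mpr hmem
      rw [this, sub_zero]
    · intro i
      have hw' : aL ((w - A.mulVec g) i) = ∑ k, aM (A i k) * spPart (u k) := by
        have h1 : aL ((w - A.mulVec g) i) = aM (w i) - aM (A.mulVec g i) := by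
          rw [aL_apply]
          simp [Pi.sub_apply, map_sub]
          rfl
        have h2 : aM (A.mulVec g i) = ((ratMat A).mulVec (fun k => aM (g k))) i :=
          (ratMat_mulVec A g i).symm
        have h3 : aM (w i) = ((ratMat A).mulVec u) i := by rw [hAu]
        rw [h1, h2, h3]
        have h5 : (ratMat A *ᵥ u) i - (ratMat A *ᵥ fun k => aM (g k)) i
            = ((ratMat A) *ᵥ (u - fun k => aM (g k))) i := by
          rw [Matrix.mulVec_sub, Pi.sub_apply]
        rw [h5]
        show ∑ k, ratMat A i k * (u - fun k => aM (g k)) k = _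
        refine Finset.sum_congr rfl fun k _ => ?_
        have h4 : (u - fun k => aM (g k)) k = spPart (u k) := by
          have := decomp (u k)
          simp only [Pi.sub_apply]
          rw [hg]
          show u k - aL (polPart (u k)) = spPart (u k)
          rw [sub_eq_iff_eq_add']
          exact this
        rw [h4, ratMat_apply]
      have hbound : ∀ k ∈ Finset.univ, (aM (A i k) * spPart (u k)) = 0 ∨
          (aM (A i k) * spPart (u k)).intDegree ≤ (d : ℤ) - 2 := by
        intro k _
        by_cases hA0 : A i k = 0
        · left; rw [hA0, map_zero, zero_mul]
        by_cases hs0 : spPart (u k) = 0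
        · left; rw [hs0, mul_zero]
        right
        have hA0' : aM (A i k) ≠ 0 := aL_ne_zero hA0
        rw [RatFunc.intDegree_mul hA0' hs0]
        have hdegAik : ((A i k).natDegree : ℤ) ≤ (d : ℤ) - 1 := by
          have hle : (A i k).natDegree ≤ matDeg A :=
            Finset.le_sup (f := fun ij : Fin n × Fin n => (A ij.1 ij.2).natDegree)
              (Finset.mem_univ (i, k))
          omega
        have hsd : (spPart (u k)).intDegree < 0 := by
          rcases spPart_mem_SP (u k) with h | h
          · exact absurd h hs0
          · exact h
        have hiA : (aM (A i k)).intDegree = (A i k).natDegree := intDegree_aL hA0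
        omega
      rcases intDegree_sum_le Finset.univ (fun k => aM (A i k) * spPart (u k)) ((d : ℤ) - 2)
          hbound with h0 | hle
      · have : aL ((w - A.mulVec g) i) = 0 := by rw [hw', h0]
        have hz : (w - A.mulVec g) i = 0 := by
          apply aL_injective
          rw [this, map_zero]
        rw [hz]
        simp
      · by_cases hz : (w - A.mulVec g) i = 0
        · rw [hz]; simp
        · have hi : (((w - A.mulVec g) i).natDegree : ℤ) ≤ (d : ℤ) - 2 := by
            rw [← intDegree_aL hz, hw']
            exact hle
          omega
  have hsurjd : ∀ Y : Matrix (Fin ν) (Fin p) K,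
      ∃ P : Matrix (Fin n) (Fin p) (Polynomial K), matDeg P ≤ d - 1 ∧ σf P = Y := by
    intro Y
    have hv : ∀ j : Fin p, ∃ w : Fin n → K[X],
        N.mkQ w = bV.equivFun.symm (fun k => Y k j) := fun j => N.mkQ_surjective _
    choose w0 hw0 using hv
    choose w1 hw1 hdeg using fun j => hrep (w0 j)
    refine ⟨Matrix.of fun i j => w1 j i, ?_, ?_⟩
    · refine Finset.sup_le fun ij _ => hdeg ij.2 ij.1
    · funext k j
      show bV.equivFun (π (fun i => w1 j i)) k = Y k j
      have : π (fun i => w1 j i) = bV.equivFun.symm (fun k => Y k j) := by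
        have he : (fun i => w1 j i) = w1 j := rfl
        rw [he, hw1 j, ← hw0 j]
      rw [this, LinearEquiv.apply_symm_apply]
  -- relations for coprimeness
  have hrel : ∃ (W : Matrix (Fin n) (Fin ν) K[X]) (Q₁ : Matrix (Fin p) (Fin ν) K[X]),
      Φ = H * ratMat W - ratMat Q₁ := by
    have hlift : ∀ k : Fin ν, ∃ w : Fin n → K[X], N.mkQ w = bV k :=
      fun k => N.mkQ_surjective _
    choose wk hwk using hlift
    refine ⟨Matrix.of fun i k => wk k i,
      Matrix.of fun i k => polPart (ψL (wk k) i), ?_⟩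
    funext i k
    show φ (bV k) i = _
    rw [Matrix.sub_apply]
    have h1 : (H * ratMat (Matrix.of fun i k => wk k i)) i k = ψL (wk k) i :=
      hcolψ _ i k
    rw [h1]
    have h2 : ratMat (Matrix.of fun i k => polPart (ψL (wk k) i)) i k
        = aL (polPart (ψL (wk k) i)) := rfl
    rw [h2]
    have h3 : φ (bV k) i = spPart (ψL (wk k) i) := by
      rw [← hwk k]
      show φ (π (wk k)) i = _
      rw [hφπ, hφ0]
    rw [h3]
    have := decomp (ψL (wk k) i)
    rw [eq_comm, sub_eq_iff_eq_add', ← this]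
  have hrel2 : ∃ (S₀ : Matrix (Fin ν) (Fin n) K[X]) (Q₂ : Matrix (Fin p) (Fin n) K[X]),
      H = ratMat Q₂ + Φ * ratMat S₀ := by
    refine ⟨Matrix.of fun k j => Polynomial.C (bV.equivFun (π (Pi.single j 1 : Fin n → K[X])) k),
      Matrix.of fun i j => polPart (ψL (Pi.single j 1 : Fin n → K[X]) i), ?_⟩
    funext i j
    rw [Matrix.add_apply]
    have hHij : H i j = ψL (Pi.single j 1 : Fin n → K[X]) i := by
      rw [hψ]
      have hterm : ∀ k, H i k * aM ((Pi.single j 1 : Fin n → K[X]) k)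
          = if k = j then H i k else 0 := by
        intro k
        rw [show ((Pi.single j 1 : Fin n → K[X]) k) = if k = j then 1 else 0 from
          Pi.single_apply j 1 k]
        split
        · rw [_root_.map_one, mul_one]
        · rw [_root_.map_zero, mul_zero]
      show H i j = ∑ k, H i k * aM ((Pi.single j 1 : Fin n → K[X]) k)
      rw [Finset.sum_congr rfl fun k _ => hterm k,
        Finset.sum_ite_eq' Finset.univ j (fun k => H i k)]
      simp
    have h1 : ratMat (Matrix.of fun i j => polPart (ψL (Pi.single j 1 : Fin n → K[X]) i)) i j
        = aL (polPart (ψL (Pi.single j 1 : Fin n → K[X]) i)) := rfl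
    have h2 : (Φ * ratMat (Matrix.of fun k j =>
          Polynomial.C (bV.equivFun (π (Pi.single j 1 : Fin n → K[X])) k))) i j
        = φ (π (Pi.single j 1 : Fin n → K[X])) i := by
      rw [Matrix.mul_apply, hφexp]
      refine Finset.sum_congr rfl fun k _ => ?_
      congr 1
    rw [h1, h2]
    have h3 : φ (π (Pi.single j 1 : Fin n → K[X])) i = spPart (ψL (Pi.single j 1 : Fin n → K[X]) i) := by
      rw [hφπ, hφ0]
    rw [h3, hHij]
    exact decomp _
  obtain ⟨W, Q₁, hWQ⟩ := hrel
  obtain ⟨S₀, Q₂, hSQ⟩ := hrel2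
  -- conclusion
  refine ⟨σf, Xm, Ao, ?_, hsurjd, ?_, ?_⟩
  · intro Y
    obtain ⟨P, _, hP⟩ := hsurjd Y
    exact ⟨P, hP⟩
  · intro P
    obtain ⟨Q, hQ⟩ := hmain P
    refine ⟨Q, ?_⟩
    rw [hQ, hC3]
  · intro S
    rw [hC3]
    constructor
    · rintro ⟨hSdet, Nmat, hSN, hcop⟩
      have hSΦ : ratMat S * Φ = ratMat (Nmat * W - S * Q₁) := by
        rw [hWQ, Matrix.mul_sub, ← Matrix.mul_assoc, hSN, ratMat_sub, ratMat_mul, ratMat_mul]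
      refine ⟨hSdet, Nmat * W - S * Q₁, hSΦ, ?_⟩
      intro U hU hUS hUN₂
      obtain ⟨S', hS'⟩ := hUS
      obtain ⟨N₂', hN₂'⟩ := hUN₂
      have hNeq : Nmat = (Nmat * W - S * Q₁) * S₀ + S * Q₂ := by
        apply ratMat_injective
        have e1 : ratMat ((Nmat * W - S * Q₁) * S₀ + S * Q₂)
            = ratMat (Nmat * W - S * Q₁) * ratMat S₀ + ratMat S * ratMat Q₂ := by
          rw [ratMat_add, ratMat_mul, ratMat_mul]
        rw [e1, ← hSΦ, ← hSN, hSQ, Matrix.mul_add, ← Matrix.mul_assoc]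
        exact add_comm _ _
      refine hcop U hU ⟨S', hS'⟩ ⟨(show Matrix (Fin p) (Fin ν) K[X] from N₂') * S₀ + S' * Q₂, ?_⟩
      rw [hNeq, (show Nmat * W - S * Q₁ = U * (show Matrix (Fin p) (Fin ν) K[X] from N₂') from hN₂'), hS', Matrix.mul_assoc, Matrix.mul_assoc, ← Matrix.mul_add]
      rfl
    · rintro ⟨hSdet, N₂, hSN₂, hcop₂⟩
      have hSH : ratMat S * H = ratMat (N₂ * S₀ + S * Q₂) := by
        rw [hSQ, Matrix.mul_add, ← Matrix.mul_assoc, hSN₂, ratMat_add, ratMat_mul, ratMat_mul]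
        exact add_comm _ _
      refine ⟨hSdet, N₂ * S₀ + S * Q₂, hSH, ?_⟩
      intro U hU hUS hUN
      obtain ⟨S', hS'⟩ := hUS
      obtain ⟨N', hN'⟩ := hUN
      have hNeq : N₂ = (N₂ * S₀ + S * Q₂) * W - S * Q₁ := by
        apply ratMat_injective
        have e1 : ratMat ((N₂ * S₀ + S * Q₂) * W - S * Q₁)
            = ratMat (N₂ * S₀ + S * Q₂) * ratMat W - ratMat S * ratMat Q₁ := by
          rw [ratMat_sub, ratMat_mul, ratMat_mul]
        rw [e1, ← hSH, ← hSN₂, hWQ, Matrix.mul_sub, ← Matrix.mul_assoc]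
      refine hcop₂ U hU ⟨S', hS'⟩ ⟨(show Matrix (Fin p) (Fin n) K[X] from N') * W - S' * Q₁, ?_⟩
      rw [hNeq, (show N₂ * S₀ + S * Q₂ = U * (show Matrix (Fin p) (Fin n) K[X] from N') from hN'), hS', Matrix.mul_assoc, Matrix.mul_assoc, ← Matrix.mul_sub]
      rfl

end PolyNull
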